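/- Let n ≥ 3 and let A be an acyclic simple digraph on {1,…,n} with at least one edge. Then the maximum of ℓ(A, α) over all α ∈ ⟨A⟩ of rank n − 1 equals the number of edges of a longest directed path in A. Consequently, the maximum of ℓ(A, α) over all acyclic simple digraphs A on {1,…,n} and all α ∈ ⟨A⟩ of rank n − 1 equals n − 1. -/

import Mathlib

noncomputable section

variable {V : Type*}

/-- The arc `(a→b)`: the map sending `a` to `b` and fixing every other point. -/
def arcMap [DecidableEq V] (a b : V) : V → V := fun x => if x = a then b else x

/-- Evaluate a word of arcs, applying the arcs from left to right. -/
def wordEval [DecidableEq V] (w : List (V × V)) : V → V :=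
  fun x => w.foldl (fun y e => arcMap e.1 e.2 y) x

/-- `α ∈ ⟨D⟩`: `α` is a (nonempty) product of arcs of the digraph `D`. -/
def InGen [DecidableEq V] (D : V → V → Prop) (α : V → V) : Prop :=
  ∃ w : List (V × V), w ≠ [] ∧ (∀ e ∈ w, D e.1 e.2) ∧ wordEval w = α

/-- `ℓ(D, α)`: the minimal length of a word in the arcs of `D` expressing `α`. -/
def arcLen [DecidableEq V] (D : V → V → Prop) (α : V → V) : ℕ :=
  sInf {k | ∃ w : List (V × V), w.length = k ∧ (∀ e ∈ w, D e.1 e.2) ∧ wordEval w = α}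

/-- `fix(α)`: the number of fixed points of `α`. -/
def fixCnt (α : V → V) : ℕ := Set.ncard {x | α x = x}

/-- `rk(α)`: the rank of `α`, i.e. the cardinality of its image. -/
def rnk (α : V → V) : ℕ := Set.ncard (Set.range α)

/-- A set `C` is a cyclic orbit of `α` if it is a weakly connected component of the
functional digraph of `α` (edges `(x, α x)`) which is a directed cycle on at least two
vertices: equivalently, `C` is the forward orbit of a periodic point, has at least two
elements, and is closed under taking preimages. -/
def IsCyclicOrbit (α : V → V) (C : Set V) : Prop :=
  2 ≤ C.ncard ∧ (∃ x ∈ C, (∃ k, 0 < k ∧ α^[k] x = x) ∧ C = {y | ∃ k, α^[k] x = y}) ∧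
    ∀ y : V, α y ∈ C → y ∈ C

/-- `cycl(α)`: the number of cyclic orbits of `α`. -/
def cyclCnt (α : V → V) : ℕ := Set.ncard {C : Set V | IsCyclicOrbit α C}

/-- `D` is connected: any two vertices are joined by a directed path in some direction. -/
def ConnectedDigraph (D : V → V → Prop) : Prop :=
  ∀ u v : V, Relation.ReflTransGen D u v ∨ Relation.ReflTransGen D v u

/-- `D` is closed (equal to its closure): whenever `(b,a)` is an edge lying on a directed
cycle of `D` (i.e. there is a directed path from `a` back to `b`), `(a,b)` is also an edge. -/
def ClosedDigraph (D : V → V → Prop) : Prop :=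
  ∀ a b : V, D b a → Relation.ReflTransGen D a b → D a b

/-- Property (★): if `v0, v1, v2` is a directed path with `d_D(v0,v2) = 2`, then every
out-neighbour of `v1` and of `v2` lies in `{v0, v1, v2}`. -/
def StarCond (D : V → V → Prop) : Prop :=
  ∀ v0 v1 v2 : V, D v0 v1 → D v1 v2 → v0 ≠ v2 → ¬ D v0 v2 →
    ∀ u : V, (D v1 u ∨ D v2 u) → (u = v0 ∨ u = v1 ∨ u = v2)

/-- `C` is a strong component of `D`. -/
def IsSC (D : V → V → Prop) (C : Set V) : Prop :=
  ∃ v : V, C = {u | Relation.ReflTransGen D u v ∧ Relation.ReflTransGen D v u}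

/-- `C1` connects to `C2`: some edge goes from `C1` to `C2`. -/
def ConnectsTo (D : V → V → Prop) (C1 C2 : Set V) : Prop :=
  ∃ v1 ∈ C1, ∃ v2 ∈ C2, D v1 v2

/-- `C1` fully connects to `C2`: all pairs are edges. -/
def FullyConnects (D : V → V → Prop) (C1 C2 : Set V) : Prop :=
  ∀ v1 ∈ C1, ∀ v2 ∈ C2, D v1 v2

/-- A terminal strong component: it connects to no other strong component. -/
def IsTerminalSC (D : V → V → Prop) (C : Set V) : Prop :=
  IsSC D C ∧ ∀ C' : Set V, IsSC D C' → C' ≠ C → ¬ ConnectsTo D C C'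

/-- Property (★★): nonterminal strong components have at most 2 vertices and terminal
strong components have at most 3 vertices. -/
def StarStarCond (D : V → V → Prop) : Prop :=
  ∀ C : Set V, IsSC D C →
    (IsTerminalSC D C → C.ncard ≤ 3) ∧ (¬ IsTerminalSC D C → C.ncard ≤ 2)

/-- The induced subdigraph on `C` is an undirected path `a - b - c` on three vertices. -/
def IsP3 (D : V → V → Prop) (C : Set V) : Prop :=
  ∃ a b c : V, a ≠ b ∧ b ≠ c ∧ a ≠ c ∧ C = {a, b, c} ∧
    ∀ u ∈ C, ∀ w ∈ C,
      (D u w ↔ (u = a ∧ w = b) ∨ (u = b ∧ w = a) ∨ (u = b ∧ w = c) ∨ (u = c ∧ w = b))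

/-- `D` has a subdigraph isomorphic to `H`: an injection mapping edges of `H` to edges of `D`. -/
def HasSubdigraph (D : V → V → Prop) {m : ℕ} (H : Fin m → Fin m → Prop) : Prop :=
  ∃ f : Fin m → V, Function.Injective f ∧ ∀ i j : Fin m, H i j → D (f i) (f j)

/-- `Θ_k`: the directed cycle on `k` vertices. -/
def Theta (k : ℕ) : Fin k → Fin k → Prop := fun i j => (j : ℕ) = ((i : ℕ) + 1) % k

/-- `Γ1` (vertices relabelled from `{1,…,5}` to `{0,…,4}`). -/
def Gamma1 : Fin 5 → Fin 5 → Prop := fun i j =>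
  ((i : ℕ), (j : ℕ)) ∈ [(0,3),(3,0),(1,3),(3,1),(2,3),(3,2),(3,4)]

/-- `Γ2` (vertices relabelled from `{1,…,5}` to `{0,…,4}`). -/
def Gamma2 : Fin 5 → Fin 5 → Prop := fun i j =>
  ((i : ℕ), (j : ℕ)) ∈ [(0,2),(2,0),(1,2),(2,1),(2,3),(3,2),(3,4)]

/-- `Γ3` (vertices relabelled from `{1,…,4}` to `{0,…,3}`). -/
def Gamma3 : Fin 4 → Fin 4 → Prop := fun i j =>
  ((i : ℕ), (j : ℕ)) ∈ [(0,1),(1,2),(2,0),(2,3)]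

/-- `Γ4` (vertices relabelled from `{1,…,5}` to `{0,…,4}`). -/
def Gamma4 : Fin 5 → Fin 5 → Prop := fun i j =>
  ((i : ℕ), (j : ℕ)) ∈ [(0,1),(1,2),(2,3),(3,0),(3,4)]

/-- No subdigraph isomorphic to `Γ1`, `Γ2`, `Γ3`, `Γ4` or `Θ_k` for `k ≥ 5`. -/
def ForbiddenFree (D : V → V → Prop) : Prop :=
  ¬ HasSubdigraph D Gamma1 ∧ ¬ HasSubdigraph D Gamma2 ∧ ¬ HasSubdigraph D Gamma3 ∧
    ¬ HasSubdigraph D Gamma4 ∧ ∀ k : ℕ, 5 ≤ k → ¬ HasSubdigraph D (Theta k)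

/-- `D` is acyclic: it has no directed cycle. -/
def AcyclicRel (D : V → V → Prop) : Prop := ∀ v : V, ¬ Relation.TransGen D v v

/-- `ψ_A(u,w)`: the maximal number of edges of a directed path from `u` to `w` in `A`
(in particular `ψ_A(u,u) = 0`). -/
def psiLongest (A : V → V → Prop) (u w : V) : ℕ :=
  sSup {l | ∃ p : List V, p.Chain' A ∧ p.Nodup ∧
    p.head? = some u ∧ p.getLast? = some w ∧ p.length = l + 1}

/-- `d_D(u,w)`: the minimal number of edges of a directed path from `u` to `w` in `D`. -/
def ddist (D : V → V → Prop) (u w : V) : ℕ :=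
  sInf {l | ∃ p : List V, p.Chain' D ∧ p.head? = some u ∧ p.getLast? = some w ∧
    p.length = l + 1}

/-- A tournament: no loops, and exactly one of `(u,v)`, `(v,u)` is an edge for `u ≠ v`. -/
def IsTournament (D : V → V → Prop) : Prop :=
  (∀ v : V, ¬ D v v) ∧ ∀ u v : V, u ≠ v → (D u v ∨ D v u) ∧ ¬ (D u v ∧ D v u)

/-- A strong (strongly connected) digraph. -/
def IsStrongDigraph (D : V → V → Prop) : Prop :=
  ∀ u v : V, Relation.ReflTransGen D u v

set_option linter.unusedSectionVars false

section AuxShift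

variable [DecidableEq V]

/-- Shift-along-a-path map. -/
def shiftFun : List V → V → V
  | [] => id
  | a :: p => fun x => if x = a then p.headD a else shiftFun p x

lemma shiftFun_nil : shiftFun ([] : List V) = id := rfl

lemma shiftFun_single (a : V) : shiftFun [a] = id := by
  funext x
  simp [shiftFun]
  intro h; simp [h]

lemma shiftFun_cons_cons (a b : V) (p : List V) (x : V) :
    shiftFun (a :: b :: p) x = if x = a then b else shiftFun (b :: p) x := rfl

lemma shiftFun_not_mem : ∀ {p : List V} {x : V}, x ∉ p → shiftFun p x = x
  | [], x, _ => rfl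
  | a :: p, x, h => by
      simp only [List.mem_cons, not_or] at h
      simp only [shiftFun, if_neg h.1]
      exact shiftFun_not_mem h.2

lemma shiftFun_mem : ∀ {p : List V} {x : V}, x ∈ p → shiftFun p x ∈ p
  | a :: p, x, h => by
      simp only [shiftFun]
      by_cases hx : x = a
      · rw [if_pos hx]
        cases p with
        | nil => simp
        | cons b q => simp [List.headD]
      · rw [if_neg hx]
        have hxp : x ∈ p := by rcases List.mem_cons.1 h with h' | h' <;> [exact absurd h' hx; exact h']
        exact List.mem_cons_of_mem _ (shiftFun_mem hxp)

lemma shiftFun_ne_head {a : V} {p : List V} (hnd : (a :: p).Nodup) (hp : p ≠ []) (x : V) :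
    shiftFun (a :: p) x ≠ a := by
  have hap : a ∉ p := (List.nodup_cons.1 hnd).1
  simp only [shiftFun]
  by_cases hx : x = a
  · rw [if_pos hx]
    cases p with
    | nil => exact absurd rfl hp
    | cons b q =>
      simp only [List.headD]
      intro h; exact hap (h ▸ (List.mem_cons_self (a := b) (l := q)))
  · rw [if_neg hx]
    by_cases hxp : x ∈ p
    · intro h; exact hap (h ▸ shiftFun_mem hxp)
    · rw [shiftFun_not_mem hxp]; exact hx

lemma shiftFun_surj : ∀ (p : List V) (a : V), (a :: p).Nodup → p ≠ [] →
    ∀ x : V, x ≠ a → ∃ y, shiftFun (a :: p) y = x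
  | [], a, _, hp, _, _ => absurd rfl hp
  | b :: q, a, hnd, _, x, hx => by
      by_cases hxb : x = b
      · exact ⟨a, by simp [shiftFun_cons_cons, hxb]⟩
      · cases q with
        | nil =>
          refine ⟨x, shiftFun_not_mem ?_⟩
          simp [hx, hxb]
        | cons c r =>
          have hnd' : (b :: c :: r).Nodup := (List.nodup_cons.1 hnd).2
          obtain ⟨y, hy⟩ := shiftFun_surj (c :: r) b hnd' (by simp) x hxb
          have hya : y ≠ a := by
            intro h
            have hanm : a ∉ b :: c :: r := (List.nodup_cons.1 hnd).1
            rw [h, shiftFun_not_mem hanm] at hy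
            exact hx hy.symm
          exact ⟨y, by rw [shiftFun_cons_cons, if_neg hya]; exact hy⟩

lemma range_shiftFun {a : V} {p : List V} (hnd : (a :: p).Nodup) (hp : p ≠ []) :
    Set.range (shiftFun (a :: p)) = {a}ᶜ := by
  ext x
  simp only [Set.mem_range, Set.mem_compl_iff, Set.mem_singleton_iff]
  constructor
  · rintro ⟨y, rfl⟩; exact shiftFun_ne_head hnd hp y
  · exact shiftFun_surj p a hnd hp x

lemma arc_comp_shift {a b : V} {q : List V} (ha : a ∉ b :: q) :
    (fun x => arcMap a b (shiftFun (b :: q) x)) = shiftFun (a :: b :: q) := by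
  funext x
  by_cases hx : x = a
  · subst hx
    rw [shiftFun_not_mem ha, shiftFun_cons_cons, if_pos rfl]
    simp [arcMap]
  · rw [shiftFun_cons_cons, if_neg hx]
    have : shiftFun (b :: q) x ≠ a := by
      by_cases hxm : x ∈ b :: q
      · intro h; exact ha (h ▸ shiftFun_mem hxm)
      · rw [shiftFun_not_mem hxm]; exact hx
    simp [arcMap, this]

lemma shiftFun_moves : ∀ {p : List V}, p.Nodup → ∀ {x : V}, x ∈ p.dropLast → shiftFun p x ≠ x
  | [], _, x, hx => by simp at hx
  | [a], _, x, hx => by simp at hx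
  | a :: b :: q, hnd, x, hx => by
      rw [List.dropLast_cons₂, List.mem_cons] at hx
      rw [shiftFun_cons_cons]
      rcases hx with rfl | hx
      · rw [if_pos rfl]
        intro h; exact (List.nodup_cons.1 hnd).1 (h ▸ (List.mem_cons_self (a := b) (l := q)))
      · have hxm : x ∈ b :: q := List.dropLast_sublist _ |>.mem hx
        have hxa : x ≠ a := by intro h; exact (List.nodup_cons.1 hnd).1 (h ▸ hxm)
        rw [if_neg hxa]
        exact shiftFun_moves (List.nodup_cons.1 hnd).2 hx

def wordOf : List V → List (V × V)
  | a :: b :: p => wordOf (b :: p) ++ [(a, b)]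
  | _ => []

lemma wordOf_length : ∀ (p : List V), (wordOf p).length = p.length - 1
  | [] => rfl
  | [_] => rfl
  | a :: b :: p => by
      simp only [wordOf, List.length_append, List.length_cons, wordOf_length (b :: p)]
      simp

lemma wordOf_edges {D : V → V → Prop} : ∀ {p : List V}, p.Chain' D → ∀ e ∈ wordOf p, D e.1 e.2
  | [], _, e, he => by simp [wordOf] at he
  | [_], _, e, he => by simp [wordOf] at he
  | a :: b :: p, hc, e, he => by
      rw [List.Chain', List.isChain_cons_cons] at hc
      simp only [wordOf, List.mem_append, List.mem_singleton] at he
      rcases he with he | rfl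
      · exact wordOf_edges hc.2 e he
      · exact hc.1

lemma wordEval_nil : wordEval ([] : List (V × V)) = id := rfl

lemma wordEval_append (w1 w2 : List (V × V)) :
    wordEval (w1 ++ w2) = fun x => wordEval w2 (wordEval w1 x) := by
  funext x; simp [wordEval, List.foldl_append]

lemma wordEval_cons (e : V × V) (w : List (V × V)) :
    wordEval (e :: w) = fun x => wordEval w (arcMap e.1 e.2 x) := rfl

lemma wordEval_singleton (e : V × V) : wordEval [e] = arcMap e.1 e.2 := rfl

lemma wordEval_wordOf : ∀ {p : List V}, p.Nodup → wordEval (wordOf p) = shiftFun p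
  | [], _ => rfl
  | [a], _ => (shiftFun_single a).symm
  | a :: b :: q, hnd => by
      have ha : a ∉ b :: q := (List.nodup_cons.1 hnd).1
      rw [wordOf.eq_def]
      simp only
      rw [wordEval_append, wordEval_wordOf (List.nodup_cons.1 hnd).2]
      rw [← arc_comp_shift ha]
      rfl

lemma moved_mem_sources : ∀ (w : List (V × V)) (x : V), wordEval w x ≠ x → x ∈ w.map Prod.fst
  | [], x, h => absurd rfl h
  | e :: w, x, h => by
      rw [wordEval_cons] at h
      by_cases hx : x = e.1
      · simp [hx]
      · have harc : arcMap e.1 e.2 x = x := if_neg hx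
        have h' : wordEval w x ≠ x := by simpa [harc] using h
        simp only [List.map_cons, List.mem_cons]
        exact Or.inr (moved_mem_sources w x h')

lemma nonfixed_le [Fintype V] (w : List (V × V)) :
    {x : V | wordEval w x ≠ x}.ncard ≤ w.length := by
  have h1 : {x : V | wordEval w x ≠ x} ⊆ ↑(w.map Prod.fst).toFinset := by
    intro x hx
    simpa using moved_mem_sources w x hx
  calc {x : V | wordEval w x ≠ x}.ncard ≤ (↑(w.map Prod.fst).toFinset : Set V).ncard :=
        Set.ncard_le_ncard h1 (Set.toFinite _)
    _ = (w.map Prod.fst).toFinset.card := Set.ncard_coe_finset _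
    _ ≤ (w.map Prod.fst).length := (w.map Prod.fst).toFinset_card_le
    _ = w.length := List.length_map _

lemma rnk_comp_le [Finite V] (f g : V → V) : rnk (f ∘ g) ≤ rnk g := by
  rw [rnk, Set.range_comp]
  exact Set.ncard_image_le (Set.toFinite _)

lemma range_arcMap {a b : V} (hab : a ≠ b) : Set.range (arcMap a b) = {a}ᶜ := by
  ext x
  simp only [Set.mem_range, Set.mem_compl_iff, Set.mem_singleton_iff]
  constructor
  · rintro ⟨y, rfl⟩
    by_cases hy : y = a
    · subst hy; simpa [arcMap] using hab.symm
    · simpa [arcMap, hy] using hy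
  · intro hx; exact ⟨x, if_neg hx⟩


lemma ncard_compl_singleton {n : ℕ} (a : Fin n) : ({a}ᶜ : Set (Fin n)).ncard = n - 1 := by
  rw [Set.compl_eq_univ_diff, Set.ncard_diff (Set.subset_univ _), Set.ncard_univ,
    Set.ncard_singleton, Nat.card_eq_fintype_card, Fintype.card_fin]

lemma ncard_compl_pair {n : ℕ} {a b : Fin n} (hab : a ≠ b) :
    ({a, b}ᶜ : Set (Fin n)).ncard = n - 2 := by
  rw [Set.compl_eq_univ_diff, Set.ncard_diff (Set.subset_univ _), Set.ncard_univ,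
    Set.ncard_pair hab, Nat.card_eq_fintype_card, Fintype.card_fin]

lemma chain'_transGen {A : V → V → Prop} :
    ∀ {p : List V} {v x : V}, List.Chain' A (v :: p) → x ∈ p → Relation.TransGen A v x
  | [], _, _, _, hx => by simp at hx
  | b :: q, v, x, hc, hx => by
      rw [List.Chain', List.isChain_cons_cons] at hc
      rcases List.mem_cons.1 hx with rfl | hx
      · exact Relation.TransGen.single hc.1
      · exact (Relation.TransGen.single hc.1).trans (chain'_transGen hc.2 hx)

lemma acyclic_edge_ne {A : V → V → Prop} (hA : AcyclicRel A) {a b : V} (h : A a b) : a ≠ b := by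
  intro he; exact hA a (Relation.TransGen.single (he ▸ h))

/-- Main facts about a path shift: it is generated, has rank n-1, and arc length
`p.length - 1`. -/
lemma shift_props {n : ℕ} (D : Fin n → Fin n → Prop) {p : List (Fin n)}
    (hc : p.Chain' D) (hnd : p.Nodup) (hlen : 2 ≤ p.length) :
    InGen D (shiftFun p) ∧ rnk (shiftFun p) = n - 1 ∧ arcLen D (shiftFun p) = p.length - 1 := by
  obtain ⟨a, q, rfl⟩ : ∃ a q, p = a :: q := by
    cases p with
    | nil => simp at hlen
    | cons a q => exact ⟨a, q, rfl⟩
  have hq : q ≠ [] := by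
    cases q with
    | nil => simp at hlen
    | cons b r => simp
  have hwne : wordOf (a :: q) ≠ [] := by
    intro h
    have hl := wordOf_length (a :: q)
    rw [h] at hl
    simp only [List.length_nil, List.length_cons] at hl hlen ⊢
    omega
  have heval : wordEval (wordOf (a :: q)) = shiftFun (a :: q) := wordEval_wordOf hnd
  refine ⟨⟨wordOf (a :: q), hwne, wordOf_edges hc, heval⟩, ?_, ?_⟩
  · rw [rnk, range_shiftFun hnd hq, ncard_compl_singleton]
  · apply le_antisymm
    · apply Nat.sInf_le
      exact ⟨wordOf (a :: q), wordOf_length _, wordOf_edges hc, heval⟩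
    · refine le_csInf ⟨(wordOf (a :: q)).length, wordOf (a :: q), rfl, wordOf_edges hc, heval⟩ ?_
      rintro k ⟨w, rfl, -, hwe⟩
      have h1 : ((a :: q).dropLast.toFinset : Set (Fin n)) ⊆ {x | wordEval w x ≠ x} := by
        intro x hx
        rw [List.coe_toFinset] at hx
        simp only [Set.mem_setOf_eq] at hx ⊢
        rw [hwe]
        exact shiftFun_moves hnd hx
      have h2 : ((a :: q).dropLast.toFinset : Set (Fin n)).ncard ≤ {x | wordEval w x ≠ x}.ncard :=
        Set.ncard_le_ncard h1 (Set.toFinite _)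
      have h3 : ((a :: q).dropLast.toFinset : Set (Fin n)).ncard = (a :: q).length - 1 := by
        rw [Set.ncard_coe_finset, List.toFinset_card_of_nodup (hnd.sublist (List.dropLast_sublist _)),
          List.length_dropLast]
      have h4 := nonfixed_le w
      omega

/-- Structure theorem: a rank `n-1` element generated by arcs of an acyclic digraph is a
shift along a directed path. -/
lemma structure_lemma {n : ℕ} (hn : 2 ≤ n) (A : Fin n → Fin n → Prop) (hA : AcyclicRel A) :
    ∀ w : List (Fin n × Fin n), w ≠ [] → (∀ e ∈ w, A e.1 e.2) → rnk (wordEval w) = n - 1 →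
    ∃ p : List (Fin n), p.Chain' A ∧ p.Nodup ∧ 2 ≤ p.length ∧ wordEval w = shiftFun p := by
  intro w
  induction w using List.reverseRecOn with
  | nil => intro h; exact absurd rfl h
  | append_singleton w e IH =>
    intro _ hedges hrnk
    have he : A e.1 e.2 := hedges e (by simp)
    have hne : e.1 ≠ e.2 := acyclic_edge_ne hA he
    cases w with
    | nil =>
      refine ⟨[e.1, e.2], by simp [List.Chain', he], by simp [hne], by simp, ?_⟩
      have hid : ([] ++ [e] : List (Fin n × Fin n)) = [e] := rfl
      rw [hid, wordEval_singleton]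
      funext x
      rw [shiftFun_cons_cons]
      by_cases hx : x = e.1 <;> simp [arcMap, hx, shiftFun_single]
    | cons e' w' =>
      -- the prefix has rank exactly n - 1
      have hsplit : wordEval ((e' :: w') ++ [e]) =
          (fun x => arcMap e.1 e.2 (wordEval (e' :: w') x)) := by
        rw [wordEval_append]; rfl
      have hprefix_le : rnk (wordEval (e' :: w')) ≤ n - 1 := by
        have he' : A e'.1 e'.2 := hedges e' (by simp)
        have hne' : e'.1 ≠ e'.2 := acyclic_edge_ne hA he'
        have : wordEval (e' :: w') = (wordEval w') ∘ (arcMap e'.1 e'.2) := rfl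
        rw [this]
        calc rnk (wordEval w' ∘ arcMap e'.1 e'.2) ≤ rnk (arcMap e'.1 e'.2) :=
              rnk_comp_le _ _
          _ = n - 1 := by rw [rnk, range_arcMap hne', ncard_compl_singleton]
      have hprefix_ge : n - 1 ≤ rnk (wordEval (e' :: w')) := by
        rw [← hrnk, hsplit]
        exact rnk_comp_le (arcMap e.1 e.2) (wordEval (e' :: w'))
      obtain ⟨p, hpc, hpnd, hplen, hpeval⟩ :=
        IH (by simp) (fun f hf => hedges f (List.mem_append_left [e] hf))
          (le_antisymm hprefix_le hprefix_ge)
      obtain ⟨v0, rest, rfl⟩ : ∃ v0 rest, p = v0 :: rest := by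
        cases p with
        | nil => simp at hplen
        | cons a q => exact ⟨a, q, rfl⟩
      have hrest : rest ≠ [] := by
        cases rest with
        | nil => simp at hplen
        | cons b r => simp
      rw [hsplit, hpeval]
      by_cases hcase : e.1 = v0
      · -- the arc acts trivially
        refine ⟨v0 :: rest, hpc, hpnd, hplen, ?_⟩
        funext x
        have := shiftFun_ne_head hpnd hrest x
        simp [arcMap, hcase, this]
      · -- must have e.2 = v0
        have he2 : e.2 = v0 := by
          by_contra he2
          have harc : ∀ z : Fin n, z ≠ v0 → arcMap e.1 e.2 z ≠ e.1 ∧ arcMap e.1 e.2 z ≠ v0 := by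
            intro z hz
            by_cases hz1 : z = e.1
            · subst hz1
              simp only [arcMap, if_pos rfl]
              exact ⟨fun h => hne h.symm, he2⟩
            · simp only [arcMap, if_neg hz1]
              exact ⟨hz1, hz⟩
          have hsub : Set.range (fun x => arcMap e.1 e.2 (shiftFun (v0 :: rest) x)) ⊆
              ({e.1, v0}ᶜ : Set (Fin n)) := by
            rintro _ ⟨y, rfl⟩
            have hy : shiftFun (v0 :: rest) y ≠ v0 := shiftFun_ne_head hpnd hrest y
            have := harc _ hy
            simp only [Set.mem_compl_iff, Set.mem_insert_iff, Set.mem_singleton_iff, not_or]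
            exact this
          have hle : rnk (fun x => arcMap e.1 e.2 (shiftFun (v0 :: rest) x)) ≤ n - 2 := by
            rw [rnk]
            calc (Set.range _).ncard ≤ ({e.1, v0}ᶜ : Set (Fin n)).ncard :=
                  Set.ncard_le_ncard hsub (Set.toFinite _)
              _ = n - 2 := ncard_compl_pair hcase
          have heq : rnk (fun x => arcMap e.1 e.2 (shiftFun (v0 :: rest) x)) = n - 1 := by
            rw [← hrnk, hsplit, hpeval]
          omega
        -- e.1 ∉ p, by acyclicity
        have hnotmem : e.1 ∉ v0 :: rest := by
          intro hmem
          rcases List.mem_cons.1 hmem with h | h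
          · exact hcase h
          · have h1 : Relation.TransGen A v0 e.1 := chain'_transGen hpc h
            have h2 : Relation.TransGen A e.1 v0 := Relation.TransGen.single (he2 ▸ he)
            exact hA v0 (h1.trans h2)
        refine ⟨e.1 :: v0 :: rest, ?_, by simp [hnotmem, hpnd], by simp, ?_⟩
        · rw [List.Chain', List.isChain_cons_cons]
          exact ⟨he2 ▸ he, hpc⟩
        · rw [he2]
          exact arc_comp_shift hnotmem

end AuxShift

/-- for `n ≥ 3` and an acyclic simple digraph `A` on `{1,…,n}` with at least
one edge, the maximum of `ℓ(A, α)` over `α ∈ ⟨A⟩` of rank `n−1` equals the number of edges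
`L` of a longest directed path in `A`; consequently the maximum over all acyclic `A` of
this quantity is `n − 1`. -/
theorem stmt13 (n : ℕ) (hn : 3 ≤ n) (A : Fin n → Fin n → Prop) (hA : AcyclicRel A)
    (hedge : ∃ a b : Fin n, A a b) (L : ℕ)
    (hL : IsGreatest {l | ∃ p : List (Fin n), p.Chain' A ∧ p.Nodup ∧ p.length = l + 1} L) :
    IsGreatest {k | ∃ α : Fin n → Fin n, InGen A α ∧ rnk α = n - 1 ∧ arcLen A α = k} L ∧
    IsGreatest {k | ∃ A' : Fin n → Fin n → Prop, AcyclicRel A' ∧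
        ∃ α : Fin n → Fin n, InGen A' α ∧ rnk α = n - 1 ∧ arcLen A' α = k} (n - 1) := by
  have hn2 : 2 ≤ n := by omega
  obtain ⟨a, b, hab⟩ := hedge
  have hne : a ≠ b := acyclic_edge_ne hA hab
  have h1L : 1 ≤ L := hL.2 ⟨[a, b], by simp [List.Chain', hab], by simp [hne], by simp⟩
  obtain ⟨p0, hc0, hnd0, hlen0⟩ := hL.1
  have hlen0' : 2 ≤ p0.length := by omega
  obtain ⟨hin0, hrk0, hal0⟩ := shift_props A hc0 hnd0 hlen0'
  constructor
  · constructor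
    · exact ⟨shiftFun p0, hin0, hrk0, by rw [hal0, hlen0]; omega⟩
    · rintro k ⟨α, ⟨w, hw0, hwe, rfl⟩, hrk, rfl⟩
      obtain ⟨p, hpc, hpnd, hplen, hpeval⟩ := structure_lemma hn2 A hA w hw0 hwe hrk
      rw [hpeval, (shift_props A hpc hpnd hplen).2.2]
      exact hL.2 ⟨p, hpc, hpnd, by omega⟩
  · constructor
    · set A' : Fin n → Fin n → Prop := fun i j => (i : ℕ) + 1 = (j : ℕ) with hA'def
      have hacy : AcyclicRel A' := by
        intro v hv
        have hmono : ∀ x y : Fin n, Relation.TransGen A' x y → (x : ℕ) < (y : ℕ) := by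
          intro x y h
          induction h with
          | single h => simp only [A', hA'def] at h; omega
          | tail _ h ih => simp only [A', hA'def] at h; omega
        exact absurd (hmono v v hv) (lt_irrefl _)
      have hchain : (List.finRange n).Chain' A' := by
        rw [List.Chain', List.isChain_iff_getElem]
        intro i hi
        simp only [List.getElem_finRange, hA'def, Fin.coe_cast]
      have hlenf : (List.finRange n).length = n := List.length_finRange (n := n)
      have h2 : 2 ≤ (List.finRange n).length := by rw [hlenf]; omega
      obtain ⟨hin, hrk, hal⟩ := shift_props A' hchain (List.nodup_finRange n) h2
      exact ⟨A', hacy, shiftFun (List.finRange n), hin, hrk, by rw [hal, hlenf]⟩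
    · rintro k ⟨A', hacy, α, ⟨w, hw0, hwe, rfl⟩, hrk, rfl⟩
      obtain ⟨p, hpc, hpnd, hplen, hpeval⟩ := structure_lemma hn2 A' hacy w hw0 hwe hrk
      rw [hpeval, (shift_props A' hpc hpnd hplen).2.2]
      have hple : p.length ≤ n := by
        have := hpnd.length_le_card
        simpa using this
      omega
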